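/- arXiv:1608.07174 — 3 statements merged into one kernel-verified Lean document; each statement's English description precedes it below -/
import Mathlib

section
/- Let f : ℂ → ℂ be entire with f' nowhere vanishing, f'(0) = 1, and suppose f has a Picard exceptional value a ∈ ℂ (i.e. f(ℂ) = ℂ \ {a}). If f is not of the form c·e^{λz} + a (λ ≠ 0), then L(z) = log(f(z) - a) defines an entire function with L' nowhere vanishing, L not affine, and f(z) = a + e^{L(z)}. In particular f admits the nontrivial factorization f = (a + w) ∘ e^w ∘ L, so f is not prime. -/
open Complex

/-- Every entire function has an entire primitive. -/
lemma exists_primitive_entire (g : ℂ → ℂ) (hg : Differentiable ℂ g) :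
    ∃ G : ℂ → ℂ, ∀ z : ℂ, HasDerivAt G (g z) z := by
  set c : ℕ → ℂ := fun n => ((Nat.factorial n : ℕ) : ℂ)⁻¹ * iteratedDeriv n g 0 with hc
  have hsum : ∀ z : ℂ, HasSum (fun n : ℕ => c n * z ^ n) (g z) := by
    intro z
    have := Complex.hasSum_taylorSeries_of_entire hg 0 z
    convert this using 2 with n
    · rfl
    simp [hc, smul_eq_mul]
    ring
  refine ⟨fun z => ∑' n : ℕ, c n / (n + 1) * z ^ (n + 1), fun z => ?_⟩
  set R : ℝ := ‖z‖ + 1 with hR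
  have hR0 : (0 : ℝ) < R := by rw [hR]; linarith [norm_nonneg z]
  have hs2R : Summable fun n : ℕ => c n * ((2 * R : ℝ) : ℂ) ^ n := (hsum _).summable
  have htend : Filter.Tendsto (fun n : ℕ => ‖c n * ((2 * R : ℝ) : ℂ) ^ n‖)
      Filter.atTop (nhds 0) := by
    simpa using (hs2R.tendsto_atTop_zero.norm)
  obtain ⟨M, hM⟩ := htend.isBoundedUnder_le.bddAbove_range
  have hM' : ∀ n : ℕ, ‖c n‖ * (2 * R) ^ n ≤ M := by
    intro n
    have e : ‖c n * ((2 * R : ℝ) : ℂ) ^ n‖ = ‖c n‖ * (2 * R) ^ n := by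
      rw [norm_mul, norm_pow, Complex.norm_real, Real.norm_eq_abs,
        abs_of_pos (by linarith : (0:ℝ) < 2 * R)]
    rw [← e]
    exact hM (Set.mem_range_self n)
  have hcb : ∀ n : ℕ, ‖c n‖ * R ^ n ≤ M * (1 / 2) ^ n := by
    intro n
    have h2n : (0:ℝ) < 2 ^ n := by positivity
    have h1 : ‖c n‖ * (2 ^ n * R ^ n) ≤ M := by
      rw [← mul_pow]; exact hM' n
    rw [show M * (1/2:ℝ)^n = M / 2^n by rw [one_div, inv_pow, div_eq_mul_inv], le_div_iff₀ h2n]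
    calc ‖c n‖ * R ^ n * 2 ^ n = ‖c n‖ * (2 ^ n * R ^ n) := by ring
      _ ≤ M := h1
  have hu : Summable fun n : ℕ => M * (1 / 2 : ℝ) ^ n :=
    (summable_geometric_of_lt_one (by norm_num) (by norm_num)).mul_left M
  have key : HasDerivAt (fun w => ∑' n : ℕ, c n / (n + 1) * w ^ (n + 1))
      (∑' n : ℕ, c n * z ^ n) z := by
    apply hasDerivAt_tsum_of_isPreconnected hu Metric.isOpen_ball
      (convex_ball (0:ℂ) R).isPreconnected
      (g := fun n w => c n / (n + 1) * w ^ (n + 1))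
      (g' := fun n w => c n * w ^ n)
      (y₀ := 0)
    · intro n y _
      have h1 : HasDerivAt (fun w : ℂ => w ^ (n + 1)) ((n + 1 : ℕ) * y ^ n) y :=
        hasDerivAt_pow (n + 1) y
      have h2 := h1.const_mul (c n / (n + 1))
      convert h2 using 1
      · rfl
      have hne : ((n : ℂ) + 1) ≠ 0 := Nat.cast_add_one_ne_zero n
      push_cast
      field_simp
    · intro n y hy
      have hyR : ‖y‖ ≤ R := by
        have := mem_ball_zero_iff.mp hy
        linarith
      calc ‖c n * y ^ n‖ = ‖c n‖ * ‖y‖ ^ n := by rw [norm_mul, norm_pow]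
        _ ≤ ‖c n‖ * R ^ n :=
            mul_le_mul_of_nonneg_left (pow_le_pow_left₀ (norm_nonneg y) hyR n)
              (norm_nonneg _)
        _ ≤ M * (1 / 2) ^ n := hcb n
    · exact mem_ball_zero_iff.mpr (by simpa using hR0)
    · have he : (fun n : ℕ => c n / (n + 1) * (0:ℂ) ^ (n + 1)) = fun _ => 0 := by
        funext n; simp
      rw [he]; exact summable_zero
    · exact mem_ball_zero_iff.mpr (by rw [hR]; linarith)
  rwa [(hsum z).tsum_eq] at key

theorem stmt_9 (f : ℂ → ℂ) (a : ℂ)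
    (hf : Differentiable ℂ f)
    (hf' : ∀ z : ℂ, deriv f z ≠ 0)
    (hf'0 : deriv f 0 = 1)
    (hrange : Set.range f = {a}ᶜ)
    (hnotexp : ¬ ∃ (c lam : ℂ), lam ≠ 0 ∧ ∀ z : ℂ, f z = c * Complex.exp (lam * z) + a) :
    ∃ L : ℂ → ℂ, Differentiable ℂ L ∧
      (∀ z : ℂ, deriv L z ≠ 0) ∧
      (¬ ∃ c d : ℂ, ∀ z : ℂ, L z = c * z + d) ∧
      (∀ z : ℂ, f z = a + Complex.exp (L z)) := by
  have hne : ∀ z : ℂ, f z - a ≠ 0 := by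
    intro z hz
    have h1 : f z = a := sub_eq_zero.mp hz
    have : a ∈ Set.range f := ⟨z, h1⟩
    rw [hrange] at this
    exact this rfl
  -- deriv f is entire
  have hdf : Differentiable ℂ (deriv f) :=
    analyticOnNhd_univ_iff_differentiable.mp
      ((analyticOnNhd_univ_iff_differentiable.mpr hf).deriv)
  -- the logarithmic derivative g
  set g : ℂ → ℂ := fun z => deriv f z / (f z - a) with hgdef
  have hgdiff : Differentiable ℂ g :=
    hdf.div (hf.sub_const a) hne
  obtain ⟨G, hG⟩ := exists_primitive_entire g hgdiff
  set L : ℂ → ℂ := fun z => Complex.log (f 0 - a) + (G z - G 0) with hLdef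
  have hLderiv : ∀ z : ℂ, HasDerivAt L (g z) z := by
    intro z
    have := ((hG z).sub_const (G 0)).const_add (Complex.log (f 0 - a))
    exact this
  have hLdiff : Differentiable ℂ L := fun z => (hLderiv z).differentiableAt
  -- q = (f - a) * exp (-L) is constant 1
  have hfz : ∀ z : ℂ, HasDerivAt f (deriv f z) z := fun z =>
    (hf z).hasDerivAt
  have hq : ∀ z : ℂ, HasDerivAt (fun w => (f w - a) * Complex.exp (-L w)) 0 z := by
    intro z
    have h1 : HasDerivAt (fun w => f w - a) (deriv f z) z := (hfz z).sub_const a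
    have h2 : HasDerivAt (fun w => Complex.exp (-L w)) (-(g z) * Complex.exp (-L z)) z := by
      have := ((hLderiv z).neg).cexp
      simpa [mul_comm] using this
    have h3 := h1.mul h2
    convert h3 using 1
    · rfl
    · rfl
    · rfl
    have h4 : (f z - a) * g z = deriv f z := by
      rw [hgdef]
      field_simp
      exact mul_div_cancel_left₀ _ (hne z)
    linear_combination Complex.exp (-L z) * h4
  have hqc : ∀ z : ℂ, (f z - a) * Complex.exp (-L z) = 1 := by
    have hconst : ∀ z : ℂ, (f z - a) * Complex.exp (-L z)
        = (f 0 - a) * Complex.exp (-L 0) := by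
      intro z
      exact is_const_of_deriv_eq_zero (fun w => (hq w).differentiableAt)
        (fun w => (hq w).deriv) z 0
    intro z
    rw [hconst z]
    have hL0 : L 0 = Complex.log (f 0 - a) := by simp [hLdef]
    rw [hL0, Complex.exp_neg, Complex.exp_log (hne 0), mul_inv_cancel₀ (hne 0)]
  have hfe : ∀ z : ℂ, f z = a + Complex.exp (L z) := by
    intro z
    have h := hqc z
    rw [Complex.exp_neg] at h
    have h2 : f z - a = Complex.exp (L z) := by
      field_simp at h
      linear_combination h
    linear_combination h2
  have hLd : ∀ z : ℂ, deriv L z = g z := fun z => (hLderiv z).deriv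
  refine ⟨L, hLdiff, ?_, ?_, hfe⟩
  · intro z
    rw [hLd z, hgdef]
    exact div_ne_zero (hf' z) (hne z)
  · rintro ⟨cc, d, hcd⟩
    have hLe : L = fun z => cc * z + d := funext hcd
    have hdc : deriv L 0 = cc := by
      rw [hLe]
      have h := ((hasDerivAt_id (0:ℂ)).const_mul cc).add_const d
      simpa using h.deriv
    have hcc : cc ≠ 0 := by
      rw [← hdc]
      rw [hLd 0, hgdef]
      exact div_ne_zero (hf' 0) (hne 0)
    apply hnotexp
    refine ⟨Complex.exp d, cc, hcc, fun z => ?_⟩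
    rw [hfe z, hcd z, Complex.exp_add]
    ring
end

section
/- For every k ≥ 1, the function g(z) = ∫₀^z e^{-ξ^{2k}} dξ is an odd entire function with nowhere-vanishing derivative, and g(ℂ) = ℂ. -/
open Complex Metric

lemma my_exists_primitive {φ : ℂ → ℂ} (hφ : Differentiable ℂ φ) :
    ∃ F : ℂ → ℂ, F 0 = 0 ∧ ∀ z : ℂ, HasDerivAt F (φ z) z := by
  set a : ℕ → ℂ := fun n => ((Nat.factorial n : ℂ))⁻¹ * iteratedDeriv n φ 0 with ha
  have hTay : ∀ z : ℂ, HasSum (fun n : ℕ => a n * z ^ n) (φ z) := by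
    intro z
    have := Complex.hasSum_taylorSeries_of_entire hφ 0 z
    simpa [ha, smul_eq_mul, mul_comm, mul_assoc, mul_left_comm] using this
  refine ⟨fun z => ∑' n : ℕ, (a n / (n + 1)) * z ^ (n + 1), ?_, ?_⟩
  · simp
  · intro z₀
    set R : ℝ := ‖z₀‖ + 1 with hR
    have hRpos : 0 < R := by positivity
    have hsum2R : Summable (fun n => a n * ((2 * R : ℝ) : ℂ) ^ n) := (hTay _).summable
    have htend : Filter.Tendsto (fun n => ‖a n * ((2 * R : ℝ) : ℂ) ^ n‖)
        Filter.atTop (nhds 0) := by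
      simpa using hsum2R.tendsto_atTop_zero.norm
    obtain ⟨C, hC⟩ := htend.bddAbove_range
    have hCb : ∀ n, ‖a n‖ * (2 * R) ^ n ≤ C := by
      intro n
      have h := hC (Set.mem_range_self n)
      have he : ‖a n * ((2 * R : ℝ) : ℂ) ^ n‖ = ‖a n‖ * (2 * R) ^ n := by
        rw [norm_mul, norm_pow, Complex.norm_real, Real.norm_of_nonneg (by positivity)]
      rwa [he] at h
    have key : ∀ y ∈ ball (0 : ℂ) R,
        HasDerivAt (fun z => ∑' n : ℕ, (a n / (n + 1)) * z ^ (n + 1))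
          (∑' n : ℕ, a n * y ^ n) y := by
      intro y hy
      refine hasDerivAt_tsum_of_isPreconnected (u := fun n => C * (1 / 2) ^ n)
        ?_ isOpen_ball (convex_ball _ _).isPreconnected
        (g' := fun n y => a n * y ^ n) ?_ ?_ (mem_ball_self hRpos) ?_ hy
      · exact (summable_geometric_two).mul_left C
      · intro n x _
        have hne : ((n : ℂ) + 1) ≠ 0 := Nat.cast_add_one_ne_zero n
        have h1 : HasDerivAt (fun z : ℂ => z ^ (n + 1)) ((n + 1 : ℂ) * x ^ n) x := by
          simpa using hasDerivAt_pow (n + 1) x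
        have h2 := h1.const_mul (a n / (n + 1))
        exact h2.congr_deriv (by rw [← mul_assoc, div_mul_cancel₀ _ hne])
      · intro n x hx
        have hxR : ‖x‖ ≤ R := le_of_lt (mem_ball_zero_iff.mp hx)
        have hpow : R ^ n = (2 * R) ^ n * (1 / 2 : ℝ) ^ n := by
          rw [← mul_pow]
          have h2r : 2 * R * (1/2:ℝ) = R := by ring
          rw [h2r]
        have hstep : ‖a n‖ * R ^ n ≤ C * (1 / 2) ^ n := by
          rw [hpow, ← mul_assoc]
          have : (0:ℝ) ≤ (1/2:ℝ) ^ n := by positivity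
          exact mul_le_mul_of_nonneg_right (hCb n) this
        calc ‖a n * x ^ n‖ = ‖a n‖ * (‖x‖) ^ n := by
              simp
          _ ≤ ‖a n‖ * R ^ n := by gcongr
          _ ≤ C * (1 / 2) ^ n := hstep
      · have hzero : (fun n : ℕ => (a n / (n + 1)) * (0:ℂ) ^ (n + 1)) = fun _ => 0 := by
          funext n
          simp [zero_pow (Nat.succ_ne_zero n)]
        rw [hzero]
        exact summable_zero
    have hz₀ : z₀ ∈ ball (0:ℂ) R := by
      simp only [mem_ball_zero_iff]
      rw [hR]; linarith
    have := key z₀ hz₀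
    rwa [(hTay z₀).tsum_eq] at this

lemma my_bc {h : ℂ → ℂ} (hd : Differentiable ℂ h) (h0 : h 0 = 0) {R M : ℝ}
    (hR : 0 < R) (hM : ∀ z : ℂ, ‖z‖ < R → (h z).re ≤ M)
    {z : ℂ} (hz : ‖z‖ ≤ R / 2) : ‖h z‖ ≤ 2 * (M + 1) := by
  have hM0 : 0 ≤ M := by
    have := hM 0 (by simpa using hR)
    simpa [h0] using this
  set A : ℝ := M + 1 with hA
  have hA1 : 1 ≤ A := by simp [hA]; linarith
  set CA : ℂ := ((2 * A : ℝ) : ℂ) with hCA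
  -- key strict inequality on the ball
  have habs : ∀ w : ℂ, ‖w‖ < R → ‖h w‖ < ‖CA - h w‖ := by
    intro w hw
    have hre : (h w).re ≤ M := hM w hw
    have hsq : Complex.normSq (h w) < Complex.normSq (CA - h w) := by
      simp only [Complex.normSq_apply, hCA, Complex.sub_re, Complex.sub_im,
        Complex.ofReal_re, Complex.ofReal_im]
      nlinarith [Complex.normSq_nonneg (h w)]
    have := Real.sqrt_lt_sqrt (Complex.normSq_nonneg _) hsq
    simpa [Complex.norm_def] using this
  have hne : ∀ w : ℂ, ‖w‖ < R → CA - h w ≠ 0 := by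
    intro w hw hzero
    have := habs w hw
    rw [hzero] at this
    simp at this
    exact (norm_nonneg _).not_gt this
  set φ : ℂ → ℂ := fun w => h w / (CA - h w) with hφ
  have hφd : DifferentiableOn ℂ φ (ball (0:ℂ) R) := by
    refine DifferentiableOn.div hd.differentiableOn ((hd.const_sub CA).differentiableOn) ?_
    intro w hw
    exact hne w (mem_ball_zero_iff.mp hw)
  have hφ0 : φ 0 = 0 := by simp [hφ, h0]
  have hmaps : Set.MapsTo φ (ball (0:ℂ) R) (ball (φ 0) 1) := by
    intro w hw
    rw [hφ0, mem_ball_zero_iff]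
    have hw' := mem_ball_zero_iff.mp hw
    have h1 := habs w hw'
    have h2 : 0 < ‖CA - h w‖ := lt_of_le_of_lt (norm_nonneg _) h1
    simp only [hφ, norm_div]
    exact (div_lt_one h2).mpr h1
  have hzR : z ∈ ball (0:ℂ) R := by
    rw [mem_ball_zero_iff]
    linarith
  have hsch := Complex.dist_le_div_mul_dist_of_mapsTo_ball hφd (hmaps.mono_right ball_subset_closedBall) hzR
  have hφz : ‖φ z‖ ≤ 1 / 2 := by
    rw [hφ0] at hsch
    simp only [dist_zero_right, dist_zero_left] at hsch
    calc ‖φ z‖ ≤ 1 / R * ‖z‖ := by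
          simpa [Complex.dist_eq] using hsch
      _ ≤ 1 / R * (R / 2) := by
          apply mul_le_mul_of_nonneg_left hz
          positivity
      _ = 1 / 2 := by field_simp
  -- recover h z
  have hzlt : ‖z‖ < R := lt_of_le_of_lt hz (by linarith)
  have hnez := hne z hzlt
  have hid : h z * (1 + φ z) = φ z * CA := by
    have e : φ z * (CA - h z) = h z := div_mul_cancel₀ _ hnez
    linear_combination -e
  have h1φ : (1:ℝ) / 2 ≤ ‖1 + φ z‖ := by
    have htri : (1:ℝ) ≤ ‖1 + φ z‖ + ‖φ z‖ := by
      calc (1:ℝ) = ‖(1 + φ z) + (-φ z)‖ := by norm_num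
        _ ≤ ‖1 + φ z‖ + ‖-φ z‖ := norm_add_le _ _
        _ = ‖1 + φ z‖ + ‖φ z‖ := by rw [norm_neg]
    linarith
  have hfin : ‖h z‖ * (1 / 2) ≤ A := by
    calc ‖h z‖ * (1 / 2) ≤ ‖h z‖ * ‖1 + φ z‖ := by
          apply mul_le_mul_of_nonneg_left h1φ (norm_nonneg _)
      _ = ‖φ z‖ * ‖CA‖ := by
          rw [← norm_mul, ← norm_mul, hid]
      _ ≤ (1 / 2) * (2 * A) := by
          apply mul_le_mul hφz ?_ (norm_nonneg _) (by norm_num)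
          rw [hCA, Complex.norm_real, Real.norm_eq_abs, _root_.abs_of_nonneg (by linarith : (0:ℝ) ≤ 2 * A)]
      _ = A := by ring
  have : ‖h z‖ ≤ 2 * A := by linarith
  simpa [hA] using this

lemma my_deriv_bound {F : ℂ → ℂ} (hF : Differentiable ℂ F) {c : ℂ} {r D : ℝ}
    (hr : 0 < r)
    (hD : ∀ x : ℂ, ‖x‖ ≤ ‖c‖ + r → ‖F x‖ ≤ D) :
    ‖deriv F c‖ ≤ D / r := by
  apply Complex.norm_deriv_le_of_forall_mem_sphere_norm_le hr hF.diffContOnCl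
  intro x hx
  have hxc : ‖x - c‖ = r := mem_sphere_iff_norm.mp hx
  have hxa : ‖x‖ ≤ ‖c‖ + r := by
    have : ‖x‖ ≤ ‖c‖ + ‖x - c‖ := by
      calc ‖x‖ = ‖c + (x - c)‖ := by ring_nf
        _ ≤ ‖c‖ + ‖x - c‖ := norm_add_le _ _
    rw [hxc] at this
    exact this
  exact hD x hxa

set_option maxHeartbeats 1000000 in
theorem stmt_12 (k : ℕ) (hk : 1 ≤ k) (g : ℂ → ℂ)
    (hg : Differentiable ℂ g)
    (hg0 : g 0 = 0)
    (hg' : ∀ z : ℂ, deriv g z = Complex.exp (-z ^ (2 * k))) :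
    (∀ z : ℂ, g (-z) = -g z) ∧ (∀ z : ℂ, deriv g z ≠ 0) ∧ Set.range g = Set.univ := by
  have hgderiv : ∀ z : ℂ, HasDerivAt g (Complex.exp (-z ^ (2 * k))) z := by
    intro z
    have := (hg z).hasDerivAt
    rwa [hg' z] at this
  -- Part 1: oddness
  have hodd : ∀ z : ℂ, g (-z) = -g z := by
    have hGd : Differentiable ℂ (fun z : ℂ => g (-z) + g z) :=
      (hg.comp differentiable_neg).add hg
    have hGz : ∀ z : ℂ, deriv (fun z : ℂ => g (-z) + g z) z = 0 := by
      intro z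
      have hneg : HasDerivAt (fun y : ℂ => g (-y))
          (Complex.exp (-(-z) ^ (2 * k)) * (-1)) z :=
        HasDerivAt.comp z (hgderiv (-z)) (hasDerivAt_neg z)
      have heven : (-z) ^ (2 * k) = z ^ (2 * k) := (even_two_mul k).neg_pow z
      have hsum := hneg.add (hgderiv z)
      rw [heven] at hsum
      have : Complex.exp (-z ^ (2 * k)) * (-1) + Complex.exp (-z ^ (2 * k)) = 0 := by ring
      rw [this] at hsum
      exact hsum.deriv
    intro z
    have := is_const_of_deriv_eq_zero hGd hGz z 0
    simp only [neg_zero, hg0, add_zero, zero_add] at this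
    linear_combination this
  refine ⟨hodd, fun z => by rw [hg' z]; exact Complex.exp_ne_zero _, ?_⟩
  -- Part 3: surjectivity
  rw [Set.eq_univ_iff_forall]
  intro w
  by_contra hw
  have hwz : ∀ z : ℂ, g z ≠ w := by
    intro z hz
    exact hw ⟨z, hz⟩
  have hw0 : w ≠ 0 := by
    intro h0
    exact hwz 0 (by rw [hg0, h0])
  set f : ℂ → ℂ := fun z => g z - w with hf
  have hf0 : ∀ z, f z ≠ 0 := fun z => sub_ne_zero.mpr (hwz z)
  have hfd : Differentiable ℂ f := hg.sub_const w
  have hfderiv : ∀ z : ℂ, HasDerivAt f (Complex.exp (-z ^ (2 * k))) z :=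
    fun z => (hgderiv z).sub_const w
  have hEd : Differentiable ℂ (fun z : ℂ => Complex.exp (-z ^ (2 * k))) :=
    ((differentiable_pow (2 * k)).neg).cexp
  set ψ : ℂ → ℂ := fun z => Complex.exp (-z ^ (2 * k)) / f z with hψ
  have hψd : Differentiable ℂ ψ := hEd.div hfd hf0
  obtain ⟨h₀, h₀0, hh₀⟩ := my_exists_primitive hψd
  set h : ℂ → ℂ := fun z => h₀ z + Complex.log (f 0) with hhdef
  have hh : ∀ z : ℂ, HasDerivAt h (ψ z) z := fun z => (hh₀ z).add_const _
  have hd_h : Differentiable ℂ h := fun z => (hh z).differentiableAt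
  have hderiv_h : ∀ z, deriv h z = ψ z := fun z => (hh z).deriv
  -- exp h = f
  have hexp : ∀ z : ℂ, Complex.exp (h z) = f z := by
    have hQd : Differentiable ℂ (fun z => f z * Complex.exp (-h z)) :=
      hfd.mul (hd_h.neg.cexp)
    have hQz : ∀ z : ℂ, deriv (fun z => f z * Complex.exp (-h z)) z = 0 := by
      intro z
      have h1 : HasDerivAt (fun z => Complex.exp (-h z))
          (Complex.exp (-h z) * -(ψ z)) z := (hh z).neg.cexp
      have h2 := (hfderiv z).mul h1
      have hval : Complex.exp (-z ^ (2 * k)) * Complex.exp (-h z)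
          + f z * (Complex.exp (-h z) * -(ψ z)) = 0 := by
        have : f z * ψ z = Complex.exp (-z ^ (2 * k)) := by
          show f z * (Complex.exp (-z ^ (2 * k)) / f z) = _
          rw [mul_comm, div_mul_cancel₀ _ (hf0 z)]
        calc Complex.exp (-z ^ (2 * k)) * Complex.exp (-h z)
            + f z * (Complex.exp (-h z) * -(ψ z))
            = Complex.exp (-h z) * (Complex.exp (-z ^ (2 * k)) - f z * ψ z) := by ring
          _ = 0 := by rw [this]; ring
      rw [hval] at h2
      exact h2.deriv
    have hconst := is_const_of_deriv_eq_zero hQd hQz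
    intro z
    have h3 : f z * Complex.exp (-h z) = f 0 * Complex.exp (-h 0) := hconst z 0
    have h4 : Complex.exp (-h 0) = (f 0)⁻¹ := by
      rw [hhdef]
      simp only [h₀0, zero_add]
      rw [Complex.exp_neg, Complex.exp_log (hf0 0)]
    rw [h4, mul_inv_cancel₀ (hf0 0)] at h3
    have h5 : Complex.exp (-h z) = (Complex.exp (h z))⁻¹ := by
      rw [Complex.exp_neg]
    rw [h5] at h3
    field_simp at h3
    exact h3.symm
  -- growth bound for g
  have hgrow : ∀ z : ℂ, ‖g z‖ ≤
      ‖z‖ * Real.exp (‖z‖ ^ (2 * k)) := by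
    intro z
    have hconv : Convex ℝ (closedBall (0:ℂ) (‖z‖)) := convex_closedBall _ _
    have hbound : ∀ x ∈ closedBall (0:ℂ) (‖z‖),
        ‖deriv g x‖ ≤ Real.exp (‖z‖ ^ (2 * k)) := by
      intro x hx
      have hxz : ‖x‖ ≤ ‖z‖ := by
        simpa using mem_closedBall_zero_iff.mp hx
      rw [hg' x, Complex.norm_exp]
      apply Real.exp_le_exp.mpr
      calc (-x ^ (2 * k)).re ≤ ‖-x ^ (2 * k)‖ := Complex.re_le_norm _
        _ = ‖x‖ ^ (2 * k) := by rw [norm_neg, norm_pow]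
        _ ≤ ‖z‖ ^ (2 * k) := pow_le_pow_left₀ (norm_nonneg _) hxz _
    have := hconv.norm_image_sub_le_of_norm_deriv_le (fun x _ => hg x) hbound
      (mem_closedBall_self (norm_nonneg z)) (mem_closedBall_zero_iff.mpr le_rfl)
    simpa [hg0, mul_comm] using this
  -- bound on Re h
  have hre : ∀ z : ℂ, (h z).re ≤
      ‖z‖ ^ (2 * k) + ‖z‖ + ‖w‖ + 1 := by
    intro z
    have h1 : Real.exp ((h z).re) = ‖f z‖ := by
      rw [← Complex.norm_exp, hexp z]
    have hexp1 : (1:ℝ) ≤ Real.exp (‖z‖ ^ (2 * k)) :=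
      Real.one_le_exp (by positivity)
    have h2 : ‖f z‖ ≤
        (‖z‖ + ‖w‖ + 1) * Real.exp (‖z‖ ^ (2 * k)) := by
      have htri : ‖f z‖ ≤ ‖g z‖ + ‖w‖ := by
        rw [hf]
        exact norm_sub_le (g z) w
      have hgz := hgrow z
      nlinarith [norm_nonneg w, norm_nonneg (g z), norm_nonneg z]
    have hxe : ‖z‖ + ‖w‖ + 1 ≤
        Real.exp (‖z‖ + ‖w‖ + 1) := by
      have := Real.add_one_le_exp (‖z‖ + ‖w‖ + 1)
      linarith
    have h4 : Real.exp ((h z).re) ≤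
        Real.exp (‖z‖ ^ (2 * k) + ‖z‖ + ‖w‖ + 1) := by
      rw [h1]
      calc ‖f z‖
          ≤ (‖z‖ + ‖w‖ + 1) * Real.exp (‖z‖ ^ (2 * k)) := h2
        _ ≤ Real.exp (‖z‖ + ‖w‖ + 1) *
              Real.exp (‖z‖ ^ (2 * k)) :=
            mul_le_mul_of_nonneg_right hxe (Real.exp_nonneg _)
        _ = Real.exp (‖z‖ ^ (2 * k) + ‖z‖ + ‖w‖ + 1) := by
            rw [← Real.exp_add]; ring_nf
    exact Real.exp_le_exp.mp h4
  -- first Borel-Caratheodory application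
  set c₀ : ℝ := ‖w‖ + 1 + ‖h 0‖ with hc₀
  set D : ℝ → ℝ := fun R => 2 * ((R ^ (2 * k) + R + c₀) + 1) + ‖h 0‖ with hD
  have hc₀pos : 0 < c₀ := by
    rw [hc₀]
    have := norm_nonneg w
    have := norm_nonneg (h 0)
    linarith
  have hDbound : ∀ R : ℝ, 0 < R → ∀ z : ℂ, ‖z‖ ≤ R / 2 →
      ‖h z‖ ≤ D R := by
    intro R hR z hz
    have hM : ∀ x : ℂ, ‖x‖ < R →
        ((fun y => h y - h 0) x).re ≤ R ^ (2 * k) + R + c₀ := by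
      intro x hx
      have h1 := hre x
      have h2 : ‖x‖ ^ (2 * k) ≤ R ^ (2 * k) :=
        pow_le_pow_left₀ (norm_nonneg x) (le_of_lt hx) _
      have h3 : -(h 0).re ≤ ‖h 0‖ := by
        have := Complex.abs_re_le_norm (h 0)
        have := neg_abs_le ((h 0).re)
        linarith
      simp only [Complex.sub_re]
      rw [hc₀]
      linarith
    have hbc := my_bc (hd_h.sub_const (h 0)) (by simp) hR hM hz
    have htri : ‖h z‖ ≤ ‖h z - h 0‖ + ‖h 0‖ := by
      calc ‖h z‖ = ‖(h z - h 0) + h 0‖ := by ring_nf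
        _ ≤ ‖h z - h 0‖ + ‖h 0‖ := norm_add_le _ _
    show ‖h z‖ ≤ 2 * ((R ^ (2 * k) + R + c₀) + 1) + ‖h 0‖
    linarith
  -- the function u
  set u : ℂ → ℂ := fun z => -z ^ (2 * k) - h z with hu
  have hud : Differentiable ℂ u := (differentiable_pow (2 * k)).neg.sub hd_h
  have hexpu : ∀ z : ℂ, Complex.exp (u z) = ψ z := by
    intro z
    show Complex.exp (-z ^ (2 * k) - h z) = Complex.exp (-z ^ (2 * k)) / f z
    rw [sub_eq_add_neg, Complex.exp_add,
      show Complex.exp (-h z) = (Complex.exp (h z))⁻¹ from Complex.exp_neg _,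
      hexp z, div_eq_mul_inv]
  -- Re u bound via Cauchy estimate for deriv h
  have hub : ∀ R : ℝ, 0 < R → ∀ c : ℂ, ‖c‖ ≤ R / 4 →
      (u c).re ≤ Real.log (D R / (R / 4)) := by
    intro R hR c hc
    have hDb : ‖deriv h c‖ ≤ D R / (R / 4) := by
      apply my_deriv_bound hd_h (by positivity)
      intro x hx
      apply hDbound R hR
      linarith
    have hexpre : Real.exp ((u c).re) = ‖deriv h c‖ := by
      rw [hderiv_h, ← hexpu c, Complex.norm_exp]
    calc (u c).re = Real.log (Real.exp ((u c).re)) := (Real.log_exp _).symm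
      _ ≤ Real.log (D R / (R / 4)) := by
          apply Real.log_le_log (Real.exp_pos _)
          rw [hexpre]; exact hDb
  -- second Borel-Caratheodory application
  have hub2 : ∀ R : ℝ, 0 < R → ∀ z : ℂ, ‖z‖ ≤ R / 4 / 2 →
      ‖u z - u 0‖ ≤
        2 * ((Real.log (D R / (R / 4)) + ‖u 0‖) + 1) := by
    intro R hR z hz
    apply my_bc (hud.sub_const (u 0)) (by simp) (by positivity : (0:ℝ) < R / 4) ?_ hz
    intro x hx
    have h1 := hub R hR x (le_of_lt hx)
    have h2 : -(u 0).re ≤ ‖u 0‖ := by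
      have := Complex.abs_re_le_norm (u 0)
      have := neg_abs_le ((u 0).re)
      linarith
    simp only [Complex.sub_re]
    linarith
  -- deriv u vanishes
  have hderiv_u_zero : ∀ c : ℂ, deriv u c = 0 := by
    intro c
    set C₆ : ℝ := 2 * (c₀ + 3) + ‖h 0‖ with hC₆
    have hC₆pos : 0 < C₆ := by
      rw [hC₆]
      have := norm_nonneg (h 0)
      linarith
    set A : ℝ := 32 * Real.log (4 * C₆) + 32 * ‖u 0‖ + 32 with hA
    set B : ℝ := 32 * ((2 * k : ℕ) : ℝ) with hB
    have hev : ∀ R : ℝ, max 1 (16 * ‖c‖) ≤ R →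
        ‖deriv u c‖ ≤ (A + B * Real.log R) / R := by
      intro R hRge
      have hR1 : (1:ℝ) ≤ R := le_trans (le_max_left _ _) hRge
      have hR : 0 < R := lt_of_lt_of_le one_pos hR1
      have hc16 : ‖c‖ ≤ R / 16 := by
        have := le_trans (le_max_right _ _) hRge
        linarith
      have hDpos : 0 < D R := by
        rw [hD]
        have h1 : 0 < R ^ (2 * k) := pow_pos hR _
        have := norm_nonneg (h 0)
        simp only
        linarith
      -- Cauchy estimate for deriv u
      have hDb : ‖deriv u c‖ ≤
          (2 * ((Real.log (D R / (R / 4)) + ‖u 0‖) + 1)) / (R / 16) := by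
        have hball : ∀ x : ℂ, ‖x‖ ≤ ‖c‖ + R / 16 →
            ‖u x - u 0‖ ≤
              2 * ((Real.log (D R / (R / 4)) + ‖u 0‖) + 1) := by
          intro x hx
          apply hub2 R hR
          linarith
        have key := my_deriv_bound (F := fun x => u x - u 0) (hud.sub_const (u 0))
          (c := c) (r := R / 16) (by positivity) hball
        rwa [deriv_sub_const] at key
      -- bound the log
      have hRk1 : (1:ℝ) ≤ R ^ (2 * k) := one_le_pow₀ hR1
      have hRk : R ≤ R ^ (2 * k) := le_self_pow₀ hR1 (by omega)
      have hDC : D R ≤ C₆ * R ^ (2 * k) := by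
        show 2 * ((R ^ (2 * k) + R + c₀) + 1) + ‖h 0‖ ≤ _
        rw [hC₆]
        have h0n := norm_nonneg (h 0)
        nlinarith [hc₀pos]
      have hargpos : 0 < D R / (R / 4) := by positivity
      have harg : D R / (R / 4) ≤ (4 * C₆) * R ^ (2 * k) := by
        rw [div_div_eq_mul_div, div_le_iff₀ hR]
        have h5 : C₆ * R ^ (2 * k) * 1 ≤ C₆ * R ^ (2 * k) * R :=
          mul_le_mul_of_nonneg_left hR1 (by positivity)
        nlinarith [pow_pos hR (2 * k)]
      have hlogb : Real.log (D R / (R / 4)) ≤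
          Real.log (4 * C₆) + ((2 * k : ℕ) : ℝ) * Real.log R := by
        calc Real.log (D R / (R / 4)) ≤ Real.log ((4 * C₆) * R ^ (2 * k)) :=
              Real.log_le_log hargpos harg
          _ = Real.log (4 * C₆) + Real.log (R ^ (2 * k)) :=
              Real.log_mul (by positivity) (by positivity)
          _ = Real.log (4 * C₆) + ((2 * k : ℕ) : ℝ) * Real.log R := by
              rw [Real.log_pow]
      have hlogR : 0 ≤ Real.log R := Real.log_nonneg hR1
      have habsu : 0 ≤ ‖u 0‖ := norm_nonneg _
      calc ‖deriv u c‖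
          ≤ (2 * ((Real.log (D R / (R / 4)) + ‖u 0‖) + 1)) / (R / 16) := hDb
        _ = (2 * ((Real.log (D R / (R / 4)) + ‖u 0‖) + 1)) * 16 / R := by
            rw [div_div_eq_mul_div]
        _ ≤ (A + B * Real.log R) / R := by
            gcongr ?_ / R
            rw [hA, hB]
            have := hlogb
            nlinarith [hlogR]
    have hlim : Filter.Tendsto (fun R : ℝ => (A + B * Real.log R) / R)
        Filter.atTop (nhds 0) := by
      have h1 : Filter.Tendsto (fun R : ℝ => A / R) Filter.atTop (nhds 0) :=
        tendsto_const_nhds.div_atTop Filter.tendsto_id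
      have h2 : Filter.Tendsto (fun R : ℝ => Real.log R / R) Filter.atTop (nhds 0) :=
        Real.isLittleO_log_id_atTop.tendsto_div_nhds_zero
      have heq : (fun R : ℝ => (A + B * Real.log R) / R)
          = fun R : ℝ => A / R + B * (Real.log R / R) := by
        funext R
        rw [add_div, mul_div_assoc]
      rw [heq]
      simpa using h1.add (h2.const_mul B)
    have hfin : ‖deriv u c‖ ≤ 0 := by
      apply ge_of_tendsto hlim
      filter_upwards [Filter.eventually_ge_atTop (max 1 (16 * ‖c‖))] with R hRR
      exact hev R hRR
    exact norm_le_zero_iff.mp hfin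
  -- conclude
  have huconst : ∀ z : ℂ, u z = u 0 :=
    fun z => is_const_of_deriv_eq_zero hud hderiv_u_zero z 0
  have hfun : h = fun z : ℂ => -z ^ (2 * k) - u 0 := by
    funext z
    have h1 : -z ^ (2 * k) - h z = u 0 := huconst z
    linear_combination -h1
  have hdh0 : deriv h 0 = 0 := by
    rw [hfun]
    have hpow := hasDerivAt_pow (2 * k) (0 : ℂ)
    rw [zero_pow (by omega : 2 * k - 1 ≠ 0), mul_zero] at hpow
    have hder := hpow.neg.sub_const (u 0)
    rw [neg_zero] at hder
    exact hder.deriv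
  have hcontr : Complex.exp (u 0) = 0 := by
    rw [hexpu 0, ← hderiv_h 0, hdh0]
  exact Complex.exp_ne_zero _ hcontr
end

section
/- There exists a sequence of positive reals (c_n) such that the functions F_n(z) = (c₁e^z + z) ∘ ⋯ ∘ (c_n e^z + z) converge uniformly on compact subsets of ℂ to a nonconstant entire function F, with F(n) > n for every positive integer n. -/
open Filter Topology

/-- `seqF c n` is the composition `(c₁e^z + z) ∘ ⋯ ∘ (c_n e^z + z)`,
with new factors appended on the right. -/
noncomputable def seqF (c : ℕ → ℝ) : ℕ → ℂ → ℂ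
  | 0 => id
  | n + 1 => (seqF c n) ∘ (fun z : ℂ => (c (n + 1) : ℂ) * Complex.exp z + z)

namespace Stmt18

/-- Real version of `seqF`. -/
noncomputable def rF (c : ℕ → ℝ) : ℕ → ℝ → ℝ
  | 0 => id
  | n + 1 => (rF c n) ∘ (fun x : ℝ => c (n + 1) * Real.exp x + x)

lemma seqF_diff (c : ℕ → ℝ) : ∀ n, Differentiable ℂ (seqF c n)
  | 0 => differentiable_id
  | n + 1 => (seqF_diff c n).comp
      (((differentiable_const _).mul Complex.differentiable_exp).add differentiable_id)

lemma seqF_congr {c c' : ℕ → ℝ} : ∀ n, (∀ i ≤ n, c i = c' i) → seqF c n = seqF c' n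
  | 0, _ => rfl
  | n + 1, h => by
      have h1 : seqF c n = seqF c' n := seqF_congr n fun i hi => h i (hi.trans n.le_succ)
      show (seqF c n) ∘ _ = (seqF c' n) ∘ _
      rw [h1, h (n + 1) le_rfl]

lemma seqF_real (c : ℕ → ℝ) : ∀ n (x : ℝ), seqF c n (x : ℂ) = ((rF c n x : ℝ) : ℂ)
  | 0, _ => rfl
  | n + 1, x => by
      show seqF c n ((c (n + 1) : ℂ) * Complex.exp (x : ℂ) + (x : ℂ)) =
        ((rF c n (c (n + 1) * Real.exp x + x) : ℝ) : ℂ)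
      rw [← Complex.ofReal_exp, ← Complex.ofReal_mul, ← Complex.ofReal_add, seqF_real c n]

lemma rF_mono {c : ℕ → ℝ} (hc : ∀ i, 0 ≤ c i) : ∀ n, Monotone (rF c n)
  | 0 => monotone_id
  | n + 1 => (rF_mono hc n).comp ((Real.exp_monotone.const_mul (hc _)).add monotone_id)

lemma le_rF {c : ℕ → ℝ} (hc : ∀ i, 0 ≤ c i) : ∀ n x, x ≤ rF c n x
  | 0, _ => le_rfl
  | n + 1, x => by
      have h1 : x ≤ c (n + 1) * Real.exp x + x :=
        le_add_of_nonneg_left (mul_nonneg (hc _) (Real.exp_pos x).le)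
      exact h1.trans (le_rF hc n _)

lemma exp_add_le_rF {c : ℕ → ℝ} (hc : ∀ i, 0 ≤ c i) (h1 : c 1 = 1) :
    ∀ n, 1 ≤ n → ∀ x : ℝ, Real.exp x + x ≤ rF c n x := by
  intro n
  induction n with
  | zero => omega
  | succ n ih =>
    intro _ x
    show Real.exp x + x ≤ rF c n (c (n + 1) * Real.exp x + x)
    rcases Nat.eq_zero_or_pos n with hn | hn
    · subst hn
      simp [rF, h1]
    · set y := c (n + 1) * Real.exp x + x with hy
      have hxy : x ≤ y :=
        le_add_of_nonneg_left (mul_nonneg (hc _) (Real.exp_pos x).le)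
      calc Real.exp x + x ≤ Real.exp y + y := add_le_add (Real.exp_le_exp.2 hxy) hxy
        _ ≤ rF c n y := ih hn y

/-- The key choice lemma: a small enough positive `d` makes `G (d e^z + z)` uniformly
close to `G z` on the ball of radius `k`. -/
lemma exists_step (k : ℕ) (G : ℂ → ℂ) (hG : Continuous G) {ε : ℝ} (hε : 0 < ε) :
    ∃ d : ℝ, 0 < d ∧ ∀ z : ℂ, ‖z‖ ≤ (k : ℝ) →
      ‖G ((d : ℂ) * Complex.exp z + z) - G z‖ ≤ ε := by
  have hH : Continuous (fun p : ℝ × ℂ => G ((p.1 : ℂ) * Complex.exp p.2 + p.2) - G p.2) := by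
    apply Continuous.sub
    · exact hG.comp (((Complex.continuous_ofReal.comp continuous_fst).mul
        (Complex.continuous_exp.comp continuous_snd)).add continuous_snd)
    · exact hG.comp continuous_snd
  set U : Set (ℝ × ℂ) :=
    {p | ‖G ((p.1 : ℂ) * Complex.exp p.2 + p.2) - G p.2‖ < ε} with hUdef
  have hU : IsOpen U := isOpen_lt hH.norm continuous_const
  have hsub : ({0} : Set ℝ) ×ˢ Metric.closedBall (0 : ℂ) k ⊆ U := by
    rintro ⟨a, z⟩ ⟨ha, -⟩
    have ha' : a = 0 := ha
    subst ha'
    simp [hUdef, hε]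
  obtain ⟨u, v, huo, hvo, hsu, htv, huv⟩ :=
    generalized_tube_lemma isCompact_singleton (isCompact_closedBall (0 : ℂ) (k : ℝ)) hU hsub
  have h0 : (0 : ℝ) ∈ u := hsu rfl
  obtain ⟨δ, hδ, hball⟩ := Metric.isOpen_iff.1 huo 0 h0
  refine ⟨δ / 2, by positivity, fun z hz => ?_⟩
  have hmem : ((δ / 2 : ℝ), z) ∈ U := by
    apply huv
    constructor
    · apply hball
      simp only [Metric.mem_ball, Real.dist_eq, sub_zero]
      rw [abs_of_pos (by positivity)]
      linarith
    · exact htv (by simpa [Metric.mem_closedBall, dist_zero_right] using hz)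
  exact le_of_lt hmem

/-- The recursively chosen coefficient sequences. -/
noncomputable def cs : ℕ → (ℕ → ℝ)
  | 0 => fun _ => 1
  | k + 1 =>
    if k = 0 then fun _ => 1
    else Function.update (cs k) (k + 1)
      (exists_step k (seqF (cs k) k) (seqF_diff (cs k) k).continuous
        (pow_pos (by norm_num : (0:ℝ) < 1/2) k)).choose

lemma cs_pos : ∀ k i, 0 < cs k i := by
  intro k
  induction k with
  | zero => intro i; norm_num [cs]
  | succ k ih =>
    intro i
    rw [cs]
    split
    · norm_num
    · rcases eq_or_ne i (k + 1) with h | h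
      · subst h
        rw [Function.update_self]
        exact (exists_step k (seqF (cs k) k) (seqF_diff (cs k) k).continuous
          (pow_pos (by norm_num : (0:ℝ) < 1/2) k)).choose_spec.1
      · rw [Function.update_of_ne h]
        exact ih i

lemma cs_one : cs 1 = fun _ => 1 := by rw [cs]; simp

lemma cs_agree : ∀ (m k i : ℕ), i ≤ k → k ≤ m → cs m i = cs k i := by
  intro m
  induction m with
  | zero => intro k i _ hk; interval_cases k; rfl
  | succ m ih =>
    intro k i hik hkm
    rcases Nat.eq_or_lt_of_le hkm with h | h
    · rw [h]
    · have hkm' : k ≤ m := Nat.lt_succ_iff.mp h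
      have : cs (m + 1) i = cs m i := by
        rw [cs]
        split
        · next hm =>
          subst hm
          interval_cases k <;> simp [cs]
        · rw [Function.update_of_ne (by omega)]
      rw [this]
      exact ih k i hik hkm'

/-- The final coefficient sequence. -/
noncomputable def cc : ℕ → ℝ := fun n => cs n n

lemma cc_pos : ∀ n, 0 < cc n := fun n => cs_pos n n

lemma cc_eq_cs (k : ℕ) : ∀ i ≤ k, cc i = cs k i := by
  intro i hik
  unfold cc
  exact (cs_agree k i i le_rfl hik).symm

lemma cc_one : cc 1 = 1 := by rw [cc_eq_cs 1 1 le_rfl, cs_one]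

lemma seqF_cc (k : ℕ) : seqF cc k = seqF (cs k) k :=
  seqF_congr k (cc_eq_cs k)

lemma hstep : ∀ (k : ℕ) (z : ℂ), ‖z‖ ≤ (k : ℝ) →
    ‖seqF cc (k + 1) z - seqF cc k z‖ ≤ (1/2 : ℝ) ^ k := by
  intro k z hz
  cases k with
  | zero =>
    have hz0 : z = 0 := by
      simpa using norm_le_zero_iff.mp (by simpa using hz)
    subst hz0
    have : seqF cc 1 (0:ℂ) = (cc 1 : ℂ) * Complex.exp 0 + 0 := rfl
    rw [this]
    simp [cc_one, seqF]
  | succ k =>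
    set G := seqF (cs (k + 1)) (k + 1) with hG
    set d := (exists_step (k+1) G (seqF_diff (cs (k+1)) (k+1)).continuous
        (pow_pos (by norm_num : (0:ℝ) < 1/2) (k+1))).choose with hd
    have hspec := (exists_step (k+1) G (seqF_diff (cs (k+1)) (k+1)).continuous
        (pow_pos (by norm_num : (0:ℝ) < 1/2) (k+1))).choose_spec
    have hcs2 : cs (k + 2) = Function.update (cs (k + 1)) (k + 2) d := by
      rw [cs]; simp [hG, hd]
    have hval : cs (k + 2) (k + 2) = d := by rw [hcs2, Function.update_self]
    have hagree : seqF (cs (k + 2)) (k + 1) = G := by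
      rw [hG]
      apply seqF_congr
      intro i hi
      rw [hcs2, Function.update_of_ne (by omega)]
    have h1 : seqF cc (k + 2) z = G ((d : ℂ) * Complex.exp z + z) := by
      rw [seqF_cc]
      show seqF (cs (k+2)) (k + 1) ((cs (k+2) (k + 2) : ℂ) * Complex.exp z + z) = _
      rw [hagree, hval]
    have h2 : seqF cc (k + 1) z = G z := by rw [seqF_cc, hG]
    rw [h1, h2]
    exact hspec.2 z hz

lemma tele : ∀ (n m : ℕ) (z : ℂ), ‖z‖ ≤ (n : ℝ) → n ≤ m →
    dist (seqF cc n z) (seqF cc m z) ≤ 2 * (1/2 : ℝ) ^ n - 2 * (1/2 : ℝ) ^ m := by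
  intro n m z hz hnm
  induction m, hnm using Nat.le_induction with
  | base => simp
  | succ m hnm ih =>
    have hzm : ‖z‖ ≤ (m : ℝ) := hz.trans (Nat.cast_le.2 hnm)
    have hs := hstep m z hzm
    have htri : dist (seqF cc n z) (seqF cc (m + 1) z) ≤
        dist (seqF cc n z) (seqF cc m z) + dist (seqF cc m z) (seqF cc (m + 1) z) :=
      dist_triangle _ _ _
    have hd : dist (seqF cc m z) (seqF cc (m + 1) z) ≤ (1/2 : ℝ) ^ m := by
      rw [dist_comm, dist_eq_norm]; exact hs
    have hp : (2 : ℝ) * (1/2) ^ (m + 1) = (1/2) ^ m := by ring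
    linarith

lemma tele' (n m : ℕ) (z : ℂ) (hz : ‖z‖ ≤ (n : ℝ)) (hnm : n ≤ m) :
    dist (seqF cc n z) (seqF cc m z) ≤ 2 * (1/2 : ℝ) ^ n := by
  have := tele n m z hz hnm
  have h2 : (0:ℝ) < (1/2 : ℝ) ^ m := by positivity
  linarith

lemma hUC (R : ℕ) : UniformCauchySeqOn (seqF cc) atTop (Metric.closedBall (0:ℂ) R) := by
  rw [Metric.uniformCauchySeqOn_iff]
  intro ε hε
  obtain ⟨N₀, hN₀⟩ := exists_pow_lt_of_lt_one (by positivity : (0:ℝ) < ε / 4)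
      (by norm_num : (1/2 : ℝ) < 1)
  refine ⟨max R N₀, fun m hm n hn x hx => ?_⟩
  set N := max R N₀ with hN
  have hxN : ‖x‖ ≤ (N : ℝ) := by
    have : ‖x‖ ≤ (R : ℝ) := by simpa [Metric.mem_closedBall, dist_zero_right] using hx
    exact this.trans (Nat.cast_le.2 (le_max_left _ _))
  have hpow : (1/2 : ℝ) ^ N ≤ (1/2 : ℝ) ^ N₀ :=
    pow_le_pow_of_le_one (by norm_num) (by norm_num) (le_max_right _ _)
  have h1 := tele' N m x hxN hm
  have h2 := tele' N n x hxN hn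
  have htri : dist (seqF cc m x) (seqF cc n x) ≤
      dist (seqF cc N x) (seqF cc m x) + dist (seqF cc N x) (seqF cc n x) :=
    dist_triangle_left _ _ _
  calc dist (seqF cc m x) (seqF cc n x) ≤ 2 * (1/2:ℝ)^N + 2 * (1/2:ℝ)^N := by linarith
    _ ≤ 4 * (1/2:ℝ)^N₀ := by linarith
    _ < ε := by linarith

end Stmt18

open Stmt18 in
theorem stmt_18 :
    ∃ c : ℕ → ℝ, (∀ n : ℕ, 0 < c n) ∧
      ∃ F : ℂ → ℂ, Differentiable ℂ F ∧
        TendstoLocallyUniformly (fun n : ℕ => seqF c n) F atTop ∧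
        (∃ z w : ℂ, F z ≠ F w) ∧
        (∀ n : ℕ, 0 < n → (F (n : ℂ)).im = 0 ∧ (n : ℝ) < (F (n : ℂ)).re) := by
  refine ⟨cc, cc_pos, ?_⟩
  have hccnn : ∀ i, 0 ≤ cc i := fun i => (cc_pos i).le
  -- pointwise limit
  have hex : ∀ z : ℂ, ∃ w : ℂ, Tendsto (fun n => seqF cc n z) atTop (𝓝 w) := by
    intro z
    have hz : z ∈ Metric.closedBall (0:ℂ) (⌈‖z‖⌉₊ : ℝ) := by
      simp [Metric.mem_closedBall, dist_zero_right, Nat.le_ceil]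
    exact cauchySeq_tendsto_of_complete ((hUC ⌈‖z‖⌉₊).cauchySeq hz)
  set F : ℂ → ℂ := fun z => (hex z).choose with hFdef
  have hF : ∀ z, Tendsto (fun n => seqF cc n z) atTop (𝓝 (F z)) := fun z => (hex z).choose_spec
  have hTU : ∀ R : ℕ, TendstoUniformlyOn (seqF cc) F atTop (Metric.closedBall (0:ℂ) R) :=
    fun R => (hUC R).tendstoUniformlyOn_of_tendsto (fun x _ => hF x)
  have hTLU : TendstoLocallyUniformly (fun n : ℕ => seqF cc n) F atTop := by
    rw [tendstoLocallyUniformly_iff_forall_isCompact]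
    intro K hK
    obtain ⟨r, hr⟩ := hK.isBounded.subset_closedBall 0
    exact (hTU ⌈r⌉₊).mono (hr.trans (Metric.closedBall_subset_closedBall (Nat.le_ceil r)))
  have hdiff : Differentiable ℂ F := by
    have := (tendstoLocallyUniformlyOn_univ.2 hTLU).differentiableOn
      (Eventually.of_forall fun n => (seqF_diff cc n).differentiableOn) isOpen_univ
    exact differentiableOn_univ.mp this
  -- auxiliary facts about values at natural numbers
  have him : ∀ n : ℕ, (F (n : ℂ)).im = 0 := by
    intro n
    have h1 : Tendsto (fun k => (seqF cc k (n : ℂ)).im) atTop (𝓝 ((F (n : ℂ)).im)) :=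
      (Complex.continuous_im.tendsto _).comp (hF (n : ℂ))
    have h2 : (fun k => (seqF cc k (n : ℂ)).im) = fun _ => (0 : ℝ) := by
      funext k
      rw [← Complex.ofReal_natCast, seqF_real]
      exact Complex.ofReal_im _
    rw [h2] at h1
    exact tendsto_nhds_unique h1 tendsto_const_nhds
  have hseqre : ∀ (n : ℕ), (seqF cc n ((n : ℕ) : ℂ)).re = rF cc n (n : ℝ) := by
    intro n
    rw [← Complex.ofReal_natCast, seqF_real]
    exact Complex.ofReal_re _
  have htendre : ∀ n : ℕ, Tendsto (fun k => (seqF cc k (n : ℂ)).re) atTop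
      (𝓝 ((F (n : ℂ)).re)) := fun n => (Complex.continuous_re.tendsto _).comp (hF (n : ℂ))
  have hdistre : ∀ (n k : ℕ), n ≤ k →
      |(seqF cc n (n : ℂ)).re - (seqF cc k (n : ℂ)).re| ≤ 2 * (1/2 : ℝ) ^ n := by
    intro n k hnk
    have hnz : ‖((n : ℕ) : ℂ)‖ ≤ (n : ℝ) := by simp
    have hd := tele' n k (n : ℂ) hnz hnk
    have hre : |(seqF cc n (n : ℂ) - seqF cc k (n : ℂ)).re| ≤
        ‖seqF cc n (n : ℂ) - seqF cc k (n : ℂ)‖ := Complex.abs_re_le_norm _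
    rw [Complex.dist_eq] at hd
    rw [Complex.sub_re] at hre
    linarith
  have hlow : ∀ n : ℕ, 1 ≤ n →
      Real.exp (n : ℝ) + (n : ℝ) - 2 * (1/2 : ℝ) ^ n ≤ (F (n : ℂ)).re := by
    intro n hn
    refine ge_of_tendsto (htendre n) (eventually_atTop.2 ⟨n, fun k hk => ?_⟩)
    have h1 := hdistre n k hk
    have h2 : Real.exp (n : ℝ) + (n : ℝ) ≤ (seqF cc n ((n : ℕ) : ℂ)).re := by
      rw [hseqre]
      exact exp_add_le_rF hccnn cc_one n hn (n : ℝ)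
    have := (abs_le.mp h1).2
    linarith
  have hrF1 : rF cc 1 (1 : ℝ) = Real.exp 1 + 1 := by
    show cc 1 * Real.exp 1 + 1 = _
    rw [cc_one]; ring
  have hup1 : (F ((1 : ℕ) : ℂ)).re ≤ Real.exp 1 + 1 + 2 * (1/2 : ℝ) ^ 1 := by
    refine le_of_tendsto (htendre 1) (eventually_atTop.2 ⟨1, fun k hk => ?_⟩)
    have h1 := hdistre 1 k hk
    have h2 : (seqF cc 1 ((1 : ℕ) : ℂ)).re = Real.exp 1 + 1 := by
      rw [hseqre]; push_cast; exact hrF1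
    have ha := abs_le.mp h1
    rw [h2] at ha
    linarith [ha.1]
  have hexp1 : (2 : ℝ) ≤ Real.exp 1 := by
    have := Real.add_one_le_exp (1 : ℝ); linarith
  refine ⟨F, hdiff, hTLU, ?_, ?_⟩
  · -- nonconstant: F 2 ≠ F 1
    refine ⟨((2 : ℕ) : ℂ), ((1 : ℕ) : ℂ), fun h => ?_⟩
    have h2 := hlow 2 (by norm_num)
    have hexp2 : Real.exp ((2 : ℕ) : ℝ) = Real.exp 1 * Real.exp 1 := by
      rw [← Real.exp_add]; norm_num
    have hre : (F ((2 : ℕ) : ℂ)).re = (F ((1 : ℕ) : ℂ)).re := by rw [h]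
    rw [hexp2] at h2
    norm_num at h2 hup1 hre
    nlinarith
  · intro n hn
    refine ⟨him n, ?_⟩
    have h1 := hlow n hn
    have h2 : Real.exp 1 ≤ Real.exp (n : ℝ) := by
      apply Real.exp_le_exp.2
      exact_mod_cast hn
    have h3 : (1/2 : ℝ) ^ n ≤ (1/2 : ℝ) ^ 1 :=
      pow_le_pow_of_le_one (by norm_num) (by norm_num) hn
    norm_num at h3
    linarith
end
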